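/- Let β > 0, c₁ > 0, and take ε = 1, k = 0 and b(t) = c₁·√(sin(2t/β)) on the interval I = (0, πβ/2). Then the energy density satisfies ρ(t) = (1/β²)(1/sin²(2t/β) − 6) for all t ∈ I, also ρ(t) = p(t) − 8/β², and ρ takes both strictly positive and strictly negative values on I (the sign change occurring where sin(2t/β) = 1/√6); hence the weak energy condition ρ ≥ 0 cannot hold on all of I. -/

import Mathlib

/-- Orthonormal-tetrad Einstein tensor component `G₀₀` of the LRS metric
`ds² = −dt² + β²dz² + b(t)²[(dr − εr dz)² + Σ(r,k)²dφ²]`. -/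
noncomputable def G00 (k ε β : ℝ) (b : ℝ → ℝ) (t : ℝ) : ℝ :=
  (k + (deriv b t) ^ 2) / (b t) ^ 2 - 3 * ε / β ^ 2

/-- Component `G₀₃`. -/
noncomputable def G03 (k ε β : ℝ) (b : ℝ → ℝ) (t : ℝ) : ℝ :=
  -2 * ε * (deriv b t) / (β * b t)

/-- Component `G₁₁ = G₂₂`. -/
noncomputable def G22 (k ε β : ℝ) (b : ℝ → ℝ) (t : ℝ) : ℝ :=
  -(deriv (deriv b) t) / (b t) + ε / β ^ 2

/-- Component `G₃₃`. -/
noncomputable def G33 (k ε β : ℝ) (b : ℝ → ℝ) (t : ℝ) : ℝ :=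
  -2 * (deriv (deriv b) t) / (b t) - (k + (deriv b t) ^ 2) / (b t) ^ 2 + ε / β ^ 2

/-- Energy density `ρ = G₂₂ + G₀₀ − G₃₃`. -/
noncomputable def rho (k ε β : ℝ) (b : ℝ → ℝ) (t : ℝ) : ℝ :=
  G22 k ε β b t + G00 k ε β b t - G33 k ε β b t

/-- Pressure `p = G₂₂`. -/
noncomputable def pres (k ε β : ℝ) (b : ℝ → ℝ) (t : ℝ) : ℝ :=
  G22 k ε β b t

section Helpers

lemma lrs_hasD1 (β c₁ : ℝ) (hβ : 0 < β) (x : ℝ) (hs : 0 < Real.sin (2*x/β)) :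
    HasDerivAt (fun s => c₁ * Real.sqrt (Real.sin (2*s/β)))
      (c₁ * Real.cos (2*x/β) / (β * Real.sqrt (Real.sin (2*x/β)))) x := by
  have hu : HasDerivAt (fun s : ℝ => 2*s/β) (2/β) x := by
    simpa using ((hasDerivAt_id x).const_mul 2).div_const β
  have h2 := (hu.sin.sqrt hs.ne').const_mul c₁
  refine h2.congr_deriv ?_
  have hsq : (0:ℝ) < Real.sqrt (Real.sin (2*x/β)) := Real.sqrt_pos.2 hs
  have hβ' : β ≠ 0 := hβ.ne'
  field_simp

lemma lrs_sin_pos (β : ℝ) (hβ : 0 < β) :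
    ∀ x ∈ Set.Ioo 0 (Real.pi * β / 2), 0 < Real.sin (2*x/β) := by
  intro x hx
  apply Real.sin_pos_of_pos_of_lt_pi
  · exact div_pos (by linarith [hx.1]) hβ
  · rw [div_lt_iff₀ hβ]; nlinarith [hx.1, hx.2]

lemma lrs_deriv1 (β c₁ : ℝ) (hβ : 0 < β) (t : ℝ)
    (ht : t ∈ Set.Ioo 0 (Real.pi * β / 2)) :
    deriv (fun x => c₁ * Real.sqrt (Real.sin (2 * x / β))) t
      = c₁ * Real.cos (2*t/β) / (β * Real.sqrt (Real.sin (2*t/β))) :=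
  (lrs_hasD1 β c₁ hβ t (lrs_sin_pos β hβ t ht)).deriv

lemma lrs_deriv2 (β c₁ : ℝ) (hβ : 0 < β) (t : ℝ)
    (ht : t ∈ Set.Ioo 0 (Real.pi * β / 2)) :
    deriv (deriv (fun x => c₁ * Real.sqrt (Real.sin (2 * x / β)))) t
      = -(c₁ * 2 / β ^ 2) * Real.sqrt (Real.sin (2*t/β))
        - c₁ * (Real.cos (2*t/β)) ^ 2 / (β ^ 2 * (Real.sqrt (Real.sin (2*t/β))) ^ 3) := by
  have hs := lrs_sin_pos β hβ t ht
  have hsq : (0:ℝ) < Real.sqrt (Real.sin (2*t/β)) := Real.sqrt_pos.2 hs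
  have hsq2 : Real.sqrt (Real.sin (2*t/β)) ^ 2 = Real.sin (2*t/β) := Real.sq_sqrt hs.le
  have hu : HasDerivAt (fun x : ℝ => 2*x/β) (2/β) t := by
    simpa using ((hasDerivAt_id t).const_mul 2).div_const β
  have hf : HasDerivAt (fun x => c₁ * Real.cos (2*x/β))
      (c₁ * (-Real.sin (2*t/β) * (2/β))) t := hu.cos.const_mul c₁
  have hg : HasDerivAt (fun x => β * Real.sqrt (Real.sin (2*x/β)))
      (β * (Real.cos (2*t/β) * (2/β) / (2 * Real.sqrt (Real.sin (2*t/β))))) t :=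
    (hu.sin.sqrt hs.ne').const_mul β
  have hg0 : β * Real.sqrt (Real.sin (2*t/β)) ≠ 0 := by positivity
  have hdiv := hf.div hg hg0
  have heq : deriv (fun x => c₁ * Real.sqrt (Real.sin (2 * x / β)))
      =ᶠ[nhds t] fun x => c₁ * Real.cos (2*x/β) / (β * Real.sqrt (Real.sin (2*x/β))) := by
    filter_upwards [isOpen_Ioo.mem_nhds ht] with x hx
    exact (lrs_hasD1 β c₁ hβ x (lrs_sin_pos β hβ x hx)).deriv
  rw [heq.deriv_eq, show (fun x => c₁ * Real.cos (2*x/β) / (β * Real.sqrt (Real.sin (2*x/β)))) = (fun x => c₁ * Real.cos (2*x/β)) / (fun x => β * Real.sqrt (Real.sin (2*x/β))) from rfl, hdiv.deriv]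
  have hβ' : β ≠ 0 := hβ.ne'
  set S := Real.sin (2*t/β) with hS
  set C := Real.cos (2*t/β) with hC
  set q := Real.sqrt S with hq
  have hqne : q ≠ 0 := hsq.ne'
  rw [show S = q ^ 2 from hsq2.symm]
  field_simp

lemma lrs_rho_eq (β c₁ : ℝ) (hβ : 0 < β) (hc : 0 < c₁) (t : ℝ)
    (ht : t ∈ Set.Ioo 0 (Real.pi * β / 2)) :
    rho 0 1 β (fun s => c₁ * Real.sqrt (Real.sin (2 * s / β))) t =
      (1 / β ^ 2) * (1 / (Real.sin (2 * t / β)) ^ 2 - 6) := by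
  have hs := lrs_sin_pos β hβ t ht
  have hsq : (0:ℝ) < Real.sqrt (Real.sin (2*t/β)) := Real.sqrt_pos.2 hs
  have hsq2 : Real.sqrt (Real.sin (2*t/β)) ^ 2 = Real.sin (2*t/β) := Real.sq_sqrt hs.le
  have hc2 : (Real.cos (2*t/β)) ^ 2 = 1 - (Real.sqrt (Real.sin (2*t/β)) ^ 2) ^ 2 := by
    rw [hsq2, Real.cos_sq']
  rw [rho, G00, G22, G33, lrs_deriv1 β c₁ hβ t ht, lrs_deriv2 β c₁ hβ t ht]
  show _ = (1 / β ^ 2) * (1 / (Real.sin (2 * t / β)) ^ 2 - 6)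
  have hβ' : β ≠ 0 := hβ.ne'
  have hc₁ : c₁ ≠ 0 := hc.ne'
  set S := Real.sin (2*t/β) with hS
  set C := Real.cos (2*t/β) with hC
  set q := Real.sqrt S with hq
  have hqne : q ≠ 0 := hsq.ne'
  have hc2' : C ^ 2 = 1 - (q ^ 2) ^ 2 := hc2
  rw [show S = q ^ 2 from hsq2.symm]
  field_simp
  ring_nf
  rw [hc2']
  ring

lemma lrs_pres_eq (β c₁ : ℝ) (hβ : 0 < β) (hc : 0 < c₁) (t : ℝ)
    (ht : t ∈ Set.Ioo 0 (Real.pi * β / 2)) :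
    pres 0 1 β (fun s => c₁ * Real.sqrt (Real.sin (2 * s / β))) t =
      (1 / β ^ 2) * (1 / (Real.sin (2 * t / β)) ^ 2 + 2) := by
  have hs := lrs_sin_pos β hβ t ht
  have hsq : (0:ℝ) < Real.sqrt (Real.sin (2*t/β)) := Real.sqrt_pos.2 hs
  have hsq2 : Real.sqrt (Real.sin (2*t/β)) ^ 2 = Real.sin (2*t/β) := Real.sq_sqrt hs.le
  have hc2 : (Real.cos (2*t/β)) ^ 2 = 1 - (Real.sqrt (Real.sin (2*t/β)) ^ 2) ^ 2 := by
    rw [hsq2, Real.cos_sq']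
  rw [pres, G22, lrs_deriv2 β c₁ hβ t ht]
  show _ = (1 / β ^ 2) * (1 / (Real.sin (2 * t / β)) ^ 2 + 2)
  have hβ' : β ≠ 0 := hβ.ne'
  have hc₁ : c₁ ≠ 0 := hc.ne'
  set S := Real.sin (2*t/β) with hS
  set C := Real.cos (2*t/β) with hC
  set q := Real.sqrt S with hq
  have hqne : q ≠ 0 := hsq.ne'
  have hc2' : C ^ 2 = 1 - (q ^ 2) ^ 2 := hc2
  rw [show S = q ^ 2 from hsq2.symm]
  field_simp
  ring_nf
  rw [hc2']
  ring

end Helpers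

theorem eps_one_energy_density_changes_sign (β c₁ : ℝ) (hβ : 0 < β) (hc : 0 < c₁) :
    (∀ t ∈ Set.Ioo 0 (Real.pi * β / 2),
        rho 0 1 β (fun s => c₁ * Real.sqrt (Real.sin (2 * s / β))) t =
          (1 / β ^ 2) * (1 / (Real.sin (2 * t / β)) ^ 2 - 6)) ∧
    (∀ t ∈ Set.Ioo 0 (Real.pi * β / 2),
        rho 0 1 β (fun s => c₁ * Real.sqrt (Real.sin (2 * s / β))) t =
          pres 0 1 β (fun s => c₁ * Real.sqrt (Real.sin (2 * s / β))) t - 8 / β ^ 2) ∧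
    (∀ t ∈ Set.Ioo 0 (Real.pi * β / 2),
        (rho 0 1 β (fun s => c₁ * Real.sqrt (Real.sin (2 * s / β))) t = 0 ↔
          Real.sin (2 * t / β) = 1 / Real.sqrt 6)) ∧
    (∃ t ∈ Set.Ioo 0 (Real.pi * β / 2),
        0 < rho 0 1 β (fun s => c₁ * Real.sqrt (Real.sin (2 * s / β))) t) ∧
    (∃ t ∈ Set.Ioo 0 (Real.pi * β / 2),
        rho 0 1 β (fun s => c₁ * Real.sqrt (Real.sin (2 * s / β))) t < 0) ∧
    ¬ (∀ t ∈ Set.Ioo 0 (Real.pi * β / 2),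
        0 ≤ rho 0 1 β (fun s => c₁ * Real.sqrt (Real.sin (2 * s / β))) t) := by
  have hβ' : β ≠ 0 := hβ.ne'
  have hβ2 : (0:ℝ) < 1 / β ^ 2 := by positivity
  have hpi := Real.pi_pos
  have hpi3 := Real.pi_gt_three
  have hneg : ∃ t ∈ Set.Ioo 0 (Real.pi * β / 2),
      rho 0 1 β (fun s => c₁ * Real.sqrt (Real.sin (2 * s / β))) t < 0 := by
    refine ⟨Real.pi * β / 4, ⟨by positivity, by nlinarith⟩, ?_⟩
    rw [lrs_rho_eq β c₁ hβ hc _ ⟨by positivity, by nlinarith⟩]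
    rw [show 2 * (Real.pi * β / 4) / β = Real.pi / 2 by field_simp; ring, Real.sin_pi_div_two]
    nlinarith
  refine ⟨fun t ht => lrs_rho_eq β c₁ hβ hc t ht, ?_, ?_, ?_, hneg, ?_⟩
  · intro t ht
    rw [lrs_rho_eq β c₁ hβ hc t ht, lrs_pres_eq β c₁ hβ hc t ht]
    field_simp
    ring
  · intro t ht
    have hs := lrs_sin_pos β hβ t ht
    rw [lrs_rho_eq β c₁ hβ hc t ht]
    rw [mul_eq_zero]
    have h1 : ¬ (1 / β ^ 2 = 0) := by positivity
    simp only [h1, false_or]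
    rw [sub_eq_zero]
    constructor
    · intro h
      have hsq : Real.sin (2*t/β) ^ 2 = 1/6 := by
        have hs2 : Real.sin (2*t/β) ^ 2 ≠ 0 := by positivity
        field_simp at h
        field_simp
        linarith
      rw [show (1:ℝ) / Real.sqrt 6 = Real.sqrt (1/6) by rw [one_div, one_div, Real.sqrt_inv]]
      rw [← hsq, Real.sqrt_sq hs.le]
    · intro h
      rw [h]
      rw [show (1:ℝ) / Real.sqrt 6 = Real.sqrt (1/6) by rw [one_div, one_div, Real.sqrt_inv]]
      rw [Real.sq_sqrt (by norm_num)]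
      norm_num
  · refine ⟨β / 100, ⟨by positivity, by nlinarith⟩, ?_⟩
    have ht : β / 100 ∈ Set.Ioo 0 (Real.pi * β / 2) := ⟨by positivity, by nlinarith⟩
    have hs := lrs_sin_pos β hβ _ ht
    rw [lrs_rho_eq β c₁ hβ hc _ ht]
    have hlt : Real.sin (2 * (β/100) / β) < 1/50 := by
      rw [show 2 * (β/100) / β = 1/50 by field_simp; ring]
      exact Real.sin_lt (by norm_num)
    have h2 : Real.sin (2 * (β/100) / β) ^ 2 < 1/6 := by nlinarith
    have h3 : (6:ℝ) < 1 / Real.sin (2 * (β/100) / β) ^ 2 := by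
      rw [lt_div_iff₀ (by positivity)]
      nlinarith
    apply mul_pos hβ2
    linarith
  · intro hall
    obtain ⟨t, ht, hlt⟩ := hneg
    exact absurd (hall t ht) (not_le.2 hlt)
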